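/- For all x ≥ 0 and all real τ with |τ| ≤ 1/2, there exists θ with |θ| ≤ 1 such that (1 − Φ(x+τ))/(1 − Φ(x)) = exp(θ √(2π) (1+x) |τ|), where Φ is the standard normal CDF. Equivalently, |ln((1−Φ(x+τ))/(1−Φ(x)))| ≤ √(2π)(1+x)|τ|. -/

import Mathlib

open MeasureTheory

/-- The standard normal cumulative distribution function. -/
noncomputable def stdNormalCDF (x : ℝ) : ℝ :=
  ∫ t in Set.Iic x, Real.exp (-t ^ 2 / 2) / Real.sqrt (2 * Real.pi)

section Aux
open Real Set Filter

noncomputable def phiF (t : ℝ) : ℝ := Real.exp (-t ^ 2 / 2) / Real.sqrt (2 * Real.pi)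

noncomputable def QF (x : ℝ) : ℝ := ∫ t in Set.Ioi x, phiF t

lemma phiF_pos (t : ℝ) : 0 < phiF t := by
  have : (0:ℝ) < Real.sqrt (2 * Real.pi) := Real.sqrt_pos.mpr (by positivity)
  exact div_pos (Real.exp_pos _) this

lemma phiF_cont : Continuous phiF := by
  unfold phiF
  exact (Real.continuous_exp.comp (by continuity)).div_const _

lemma phiF_integrable : Integrable phiF := by
  have h := (integrable_exp_neg_mul_sq (by norm_num : (0:ℝ) < 1/2)).div_const
    (Real.sqrt (2 * Real.pi))
  convert h using 2 with t
  unfold phiF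
  ring_nf

lemma phiF_total : ∫ t, phiF t = 1 := by
  have h : ∫ t : ℝ, Real.exp (-(1/2 : ℝ) * t ^ 2) = Real.sqrt (Real.pi / (1/2)) :=
    integral_gaussian (1/2)
  have h2 : Real.pi / (1/2 : ℝ) = 2 * Real.pi := by ring
  have hne : Real.sqrt (2 * Real.pi) ≠ 0 := by positivity
  unfold phiF
  rw [integral_div]
  rw [show (fun t : ℝ => Real.exp (-t ^ 2 / 2)) = fun t : ℝ => Real.exp (-(1/2 : ℝ) * t ^ 2) by
    funext t; ring_nf]
  rw [h, h2, div_self hne]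

lemma stdNormal_eq (x : ℝ) : 1 - stdNormalCDF x = QF x := by
  have h := intervalIntegral.integral_Iic_add_Ioi (b := x) phiF_integrable.integrableOn
    phiF_integrable.integrableOn
  rw [phiF_total] at h
  have : stdNormalCDF x = ∫ t in Set.Iic x, phiF t := rfl
  rw [this, QF]
  linarith

lemma QF_pos (x : ℝ) : 0 < QF x := by
  rw [QF, setIntegral_pos_iff_support_of_nonneg_ae]
  · have : Function.support phiF = Set.univ := by
      ext t; simp [Function.mem_support, (phiF_pos t).ne']
    rw [this, Set.univ_inter, Real.volume_Ioi]
    norm_num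
  · exact Filter.Eventually.of_forall fun t => (phiF_pos t).le
  · exact phiF_integrable.integrableOn

lemma QF_antitone : Antitone QF := by
  intro a b hab
  exact setIntegral_mono_set phiF_integrable.integrableOn
    (Filter.Eventually.of_forall fun t => (phiF_pos t).le)
    (HasSubset.Subset.eventuallyLE (Set.Ioi_subset_Ioi hab))

lemma QF_zero : QF 0 = 1/2 := by
  have h : ∫ t in Set.Ioi (0:ℝ), Real.exp (-(1/2 : ℝ) * t ^ 2)
      = Real.sqrt (Real.pi / (1/2)) / 2 := integral_gaussian_Ioi (1/2)
  have h2 : Real.pi / (1/2 : ℝ) = 2 * Real.pi := by ring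
  have hne : Real.sqrt (2 * Real.pi) ≠ 0 := by positivity
  rw [QF]
  unfold phiF
  rw [integral_div]
  rw [show (fun t : ℝ => Real.exp (-t ^ 2 / 2)) = fun t : ℝ => Real.exp (-(1/2 : ℝ) * t ^ 2) by
    funext t; ring_nf]
  rw [h, h2]
  field_simp

lemma QF_hasDeriv (t : ℝ) : HasDerivAt QF (-(phiF t)) t := by
  have key : QF = fun y => QF 0 - ∫ s in (0:ℝ)..y, phiF s := by
    funext y
    have h1 := intervalIntegral.integral_Iic_add_Ioi (b := y) phiF_integrable.integrableOn
      phiF_integrable.integrableOn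
    have h2 := intervalIntegral.integral_Iic_add_Ioi (b := (0:ℝ)) phiF_integrable.integrableOn
      phiF_integrable.integrableOn
    have h3 := intervalIntegral.integral_Iic_sub_Iic (a := (0:ℝ)) (b := y) phiF_integrable.integrableOn
      phiF_integrable.integrableOn
    simp only [QF]
    linarith
  have hd : HasDerivAt (fun y => ∫ s in (0:ℝ)..y, phiF s) (phiF t) t :=
    intervalIntegral.integral_hasDerivAt_right phiF_integrable.intervalIntegrable
      (phiF_cont.stronglyMeasurableAtFilter _ _) phiF_cont.continuousAt
  rw [key]
  exact ((hasDerivAt_const t (QF 0)).sub hd).congr_deriv (by ring)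

lemma phiF_hasDeriv (s : ℝ) : HasDerivAt phiF (-s * phiF s) s := by
  have h1 : HasDerivAt (fun u : ℝ => -u ^ 2 / 2) (-s) s := by
    have := ((hasDerivAt_pow 2 s).neg).div_const 2
    simpa using this.congr_deriv (by ring)
  have h2 := (h1.exp).div_const (Real.sqrt (2 * Real.pi))
  have : phiF = fun u => Real.exp (-u ^ 2 / 2) / Real.sqrt (2 * Real.pi) := rfl
  rw [this]
  refine h2.congr_deriv ?_
  show _ = -s * (Real.exp (-s ^ 2 / 2) / Real.sqrt (2 * Real.pi))
  ring

lemma phiF_tendsto_zero : Tendsto phiF atTop (nhds 0) := by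
  have h1 : Tendsto (fun u : ℝ => u ^ 2 / 2) atTop atTop :=
    (tendsto_pow_atTop (by norm_num)).atTop_div_const (by norm_num)
  have h2 : Tendsto (fun u : ℝ => Real.exp (-(u ^ 2 / 2))) atTop (nhds 0) :=
    Real.tendsto_exp_neg_atTop_nhds_zero.comp h1
  have h3 := h2.div_const (Real.sqrt (2 * Real.pi))
  rw [zero_div] at h3
  convert h3 using 2 with u
  unfold phiF
  ring_nf

lemma mills (t : ℝ) (ht : 0 ≤ t) : phiF t ≤ (t + 1) * QF t := by
  set g : ℝ → ℝ := fun s => phiF s / (s + 1) with hg_def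
  set g' : ℝ → ℝ := fun s => -(((s^2 + s + 1) / (s + 1)^2) * phiF s) with hg'_def
  have hderiv : ∀ s ∈ Set.Ici t, HasDerivAt g (g' s) s := by
    intro s hs
    have hs0 : (0:ℝ) ≤ s := le_trans ht hs
    have hne : s + 1 ≠ 0 := by positivity
    have h1 := (phiF_hasDeriv s).div ((hasDerivAt_id s).add_const 1) hne
    refine h1.congr_deriv ?_
    simp only [hg'_def, id]
    field_simp
    ring
  have hbound : ∀ s ∈ Set.Ioi t, ‖g' s‖ ≤ ‖phiF s‖ := by
    intro s hs
    have hs0 : (0:ℝ) ≤ s := le_trans ht (le_of_lt hs)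
    have hfrac : (s^2 + s + 1) / (s + 1)^2 ≤ 1 := by
      rw [div_le_one (by positivity)]
      nlinarith
    have hfrac0 : 0 ≤ (s^2 + s + 1) / (s + 1)^2 := by positivity
    simp only [hg'_def, norm_neg, Real.norm_eq_abs]
    rw [abs_of_nonneg (mul_nonneg hfrac0 (phiF_pos s).le),
      abs_of_nonneg (phiF_pos s).le]
    nlinarith [phiF_pos s]
  have hg'meas : AEStronglyMeasurable g' (volume.restrict (Set.Ioi t)) := by
    have hcont : ContinuousOn g' (Set.Ioi t) := by
      apply ContinuousOn.neg
      apply ContinuousOn.mul _ phiF_cont.continuousOn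
      apply ContinuousOn.div (by fun_prop) (by fun_prop)
      intro s hs
      have h0 : (0:ℝ) ≤ s := le_trans ht (le_of_lt hs)
      have h1 : (0:ℝ) < s + 1 := by linarith
      exact (pow_pos h1 2).ne'
    exact hcont.aestronglyMeasurable measurableSet_Ioi
  have hint : IntegrableOn g' (Set.Ioi t) := by
    apply Integrable.mono phiF_integrable.integrableOn hg'meas
    rw [ae_restrict_iff' measurableSet_Ioi]
    exact Filter.Eventually.of_forall hbound
  have hlim : Tendsto g atTop (nhds 0) := by
    apply tendsto_of_tendsto_of_tendsto_of_le_of_le' tendsto_const_nhds phiF_tendsto_zero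
    · filter_upwards [eventually_ge_atTop (0:ℝ)] with u hu
      show (0:ℝ) ≤ phiF u / (u + 1)
      have h1 : (0:ℝ) < u + 1 := by linarith
      exact (div_pos (phiF_pos u) h1).le
    · filter_upwards [eventually_ge_atTop (0:ℝ)] with u hu
      rw [hg_def]
      calc phiF u / (u + 1) ≤ phiF u / 1 := by
            apply div_le_div_of_nonneg_left (phiF_pos u).le one_pos (by linarith)
        _ = phiF u := div_one _
  have hFTC := integral_Ioi_of_hasDerivAt_of_tendsto' hderiv hint hlim
  have hzero : g t = phiF t / (t + 1) := rfl
  have heq : phiF t / (t + 1) = ∫ s in Set.Ioi t, ((s^2 + s + 1) / (s + 1)^2) * phiF s := by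
    have : ∫ s in Set.Ioi t, g' s
        = -∫ s in Set.Ioi t, ((s^2 + s + 1) / (s + 1)^2) * phiF s := by
      rw [hg'_def]
      exact integral_neg _
    rw [this] at hFTC
    rw [hzero] at hFTC
    linarith
  have hle : (∫ s in Set.Ioi t, ((s^2 + s + 1) / (s + 1)^2) * phiF s)
      ≤ ∫ s in Set.Ioi t, phiF s := by
    apply setIntegral_mono_on _ phiF_integrable.integrableOn measurableSet_Ioi
    · intro s hs
      have hs0 : (0:ℝ) ≤ s := le_trans ht (le_of_lt hs)
      have hfrac : (s^2 + s + 1) / (s + 1)^2 ≤ 1 := by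
        rw [div_le_one (by positivity)]
        nlinarith
      nlinarith [phiF_pos s]
    · refine hint.neg.congr (Filter.Eventually.of_forall fun s => ?_)
      simp [hg'_def]
  have hQ : QF t = ∫ s in Set.Ioi t, phiF s := rfl
  have h2 : phiF t / (t + 1) ≤ QF t := by rw [heq, hQ]; exact hle
  rw [div_le_iff₀ (by positivity : (0:ℝ) < t + 1)] at h2
  linarith [h2]

lemma sqrt_two_pi_sq : Real.sqrt (2 * Real.pi) ^ 2 = 2 * Real.pi := by
  rw [Real.sq_sqrt (by positivity)]

lemma hazard_bound (x t : ℝ) (hx : 0 ≤ x) (h2 : t ≤ x + 1/2) :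
    phiF t ≤ Real.sqrt (2 * Real.pi) * (1 + x) * QF t := by
  have hs : (0:ℝ) < Real.sqrt (2 * Real.pi) := Real.sqrt_pos.mpr (by positivity)
  have hs2 := sqrt_two_pi_sq
  have hpi := Real.pi_gt_three
  rcases le_or_gt t 0 with h | h
  · have hq : (1:ℝ)/2 ≤ QF t := by
      have := QF_antitone h
      rw [QF_zero] at this
      linarith
    have hp : phiF t ≤ 1 / Real.sqrt (2 * Real.pi) := by
      have he : Real.exp (-t ^ 2 / 2) ≤ 1 := by
        rw [show (1:ℝ) = Real.exp 0 from Real.exp_zero.symm]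
        exact Real.exp_le_exp.mpr (by nlinarith)
      unfold phiF
      gcongr
    have key : (1:ℝ) / Real.sqrt (2 * Real.pi) ≤ Real.sqrt (2 * Real.pi) / 2 := by
      rw [div_le_div_iff₀ hs (by norm_num)]
      nlinarith
    have hQt := QF_pos t
    calc phiF t ≤ Real.sqrt (2 * Real.pi) / 2 := le_trans hp key
      _ ≤ Real.sqrt (2 * Real.pi) * (1 + x) * (1/2) := by nlinarith
      _ ≤ Real.sqrt (2 * Real.pi) * (1 + x) * QF t := by
          nlinarith [mul_le_mul_of_nonneg_left hq
            (show (0:ℝ) ≤ Real.sqrt (2 * Real.pi) * (1 + x) by positivity)]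
  · have hm := mills t h.le
    have hQt := QF_pos t
    have hkey : t + 1 ≤ Real.sqrt (2 * Real.pi) * (1 + x) := by
      have h32 : (3:ℝ)/2 ≤ Real.sqrt (2 * Real.pi) := by
        nlinarith
      nlinarith
    calc phiF t ≤ (t + 1) * QF t := hm
      _ ≤ Real.sqrt (2 * Real.pi) * (1 + x) * QF t := by nlinarith

lemma log_bound (x τ : ℝ) (hx : 0 ≤ x) (hτ : |τ| ≤ 1/2) :
    |Real.log (QF (x + τ)) - Real.log (QF x)| ≤ Real.sqrt (2 * Real.pi) * (1 + x) * |τ| := by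
  set s : Set ℝ := Set.Icc (x - 1/2) (x + 1/2) with hs_def
  have hconv : Convex ℝ s := convex_Icc _ _
  have hL : ∀ t ∈ s, HasDerivWithinAt (fun u => Real.log (QF u)) (-(phiF t) / QF t) s t :=
    fun t _ => ((QF_hasDeriv t).log (QF_pos t).ne').hasDerivWithinAt
  have hbound : ∀ t ∈ s, ‖-(phiF t) / QF t‖ ≤ Real.sqrt (2 * Real.pi) * (1 + x) := by
    intro t ht
    have hQt := QF_pos t
    rw [Real.norm_eq_abs, abs_div, abs_neg, abs_of_nonneg (phiF_pos t).le,
      abs_of_nonneg hQt.le, div_le_iff₀ hQt]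
    exact hazard_bound x t hx ht.2
  have hmem1 : x ∈ s := by
    constructor <;> [linarith; linarith]
  have hmem2 : x + τ ∈ s := by
    rw [abs_le] at hτ
    constructor <;> [linarith [hτ.1]; linarith [hτ.2]]
  have := hconv.norm_image_sub_le_of_norm_hasDerivWithin_le hL hbound hmem1 hmem2
  simpa [Real.norm_eq_abs, add_sub_cancel_left] using this

end Aux

/-- For `x ≥ 0` and `|τ| ≤ 1/2`:
`|ln((1 − Φ(x+τ))/(1 − Φ(x)))| ≤ √(2π)(1+x)|τ|`; equivalently there is `θ`
with `|θ| ≤ 1` such that the ratio equals `exp(θ √(2π)(1+x)|τ|)`. -/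
theorem stmt12 (x τ : ℝ) (hx : 0 ≤ x) (hτ : |τ| ≤ 1 / 2) :
    |Real.log ((1 - stdNormalCDF (x + τ)) / (1 - stdNormalCDF x))| ≤
      Real.sqrt (2 * Real.pi) * (1 + x) * |τ| ∧
    ∃ θ : ℝ, |θ| ≤ 1 ∧
      (1 - stdNormalCDF (x + τ)) / (1 - stdNormalCDF x) =
        Real.exp (θ * Real.sqrt (2 * Real.pi) * (1 + x) * |τ|) := by
  rw [stdNormal_eq, stdNormal_eq]
  have hQ1 := QF_pos (x + τ)
  have hQ2 := QF_pos x
  have hratio : (0:ℝ) < QF (x + τ) / QF x := div_pos hQ1 hQ2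
  have hlog : Real.log (QF (x + τ) / QF x) = Real.log (QF (x + τ)) - Real.log (QF x) :=
    Real.log_div hQ1.ne' hQ2.ne'
  have hb : |Real.log (QF (x + τ) / QF x)| ≤ Real.sqrt (2 * Real.pi) * (1 + x) * |τ| := by
    rw [hlog]
    exact log_bound x τ hx hτ
  refine ⟨hb, ?_⟩
  set M : ℝ := Real.sqrt (2 * Real.pi) * (1 + x) * |τ| with hM_def
  set L : ℝ := Real.log (QF (x + τ) / QF x) with hL_def
  rcases eq_or_lt_of_le (abs_nonneg τ) with h0 | h0
  · refine ⟨0, by norm_num, ?_⟩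
    have hτ0 : τ = 0 := abs_eq_zero.mp h0.symm
    rw [hτ0]
    simp [div_self hQ2.ne']
  · have hM : 0 < M := by
      have hs : (0:ℝ) < Real.sqrt (2 * Real.pi) := Real.sqrt_pos.mpr (by positivity)
      rw [hM_def]
      positivity
    refine ⟨L / M, ?_, ?_⟩
    · rw [abs_div, abs_of_pos hM, div_le_one hM]
      exact hb
    · have : L / M * Real.sqrt (2 * Real.pi) * (1 + x) * |τ| = L := by
        field_simp [hM_def]
        ring
      rw [this, hL_def, Real.exp_log hratio]
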